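/- Let η: ℝ → [0,1] be Lipschitz with Lipschitz constant L and let K(t,s) be a kernel satisfying |K(t,s)| ≤ C |η(t)−η(s)| |t−s|^{-3/2} for all t ≠ s. If additionally ‖η'‖_∞ · h̃ ≤ c₀ for some h̃ > 0 (i.e., L ≤ c₀/h̃), then |K(t,s)| ≲ h̃^{-3/2} φ((t−s)/h̃) where φ(t) = min{|t|^{-1/2}, |t|^{-3/2}}, and consequently the integral operator with kernel K is bounded from L²(ℝ) to L^p(ℝ) for every p ∈ [2, ∞) with norm ≲ h̃^{-1/2 − (1/2 − 1/p)}, by Young's inequality. -/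

import Mathlib

open MeasureTheory Real
open scoped ENNReal

private lemma lint_sub_left (F : ℝ → ℝ≥0∞) (hF : Measurable F) (t : ℝ) :
    ∫⁻ s : ℝ, F (t - s) = ∫⁻ s : ℝ, F s := by
  have h2 : (∫⁻ s : ℝ, F (t + -s)) = ∫⁻ s : ℝ, F (t + s) :=
    (Measure.measurePreserving_neg (volume : Measure ℝ)).lintegral_comp
      (hF.comp (measurable_const.add measurable_id))
  simp only [← sub_eq_add_neg] at h2
  rw [h2, lintegral_add_left_eq_self F t]

private lemma lint_scale (F : ℝ → ℝ≥0∞) (hF : Measurable F) {h : ℝ} (hh : 0 < h) :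
    ∫⁻ u : ℝ, F (u / h) = ENNReal.ofReal h * ∫⁻ u : ℝ, F u := by
  have h1 : (∫⁻ u : ℝ, F (u / h)) = ∫⁻ u : ℝ, F (h⁻¹ * u) := by
    apply lintegral_congr; intro u; rw [inv_mul_eq_div]
  rw [h1, ← lintegral_map hF (measurable_const_mul h⁻¹),
    Real.map_volume_mul_left (inv_ne_zero hh.ne'), inv_inv, abs_of_pos hh,
    lintegral_smul_measure, smul_eq_mul]

private lemma I_fin {r : ℝ} (hr1 : 1 ≤ r) (hr2 : r < 2) :
    (∫⁻ u : ℝ, ENNReal.ofReal (min (|u| ^ (-(1:ℝ)/2)) (|u| ^ (-(3:ℝ)/2)) ^ r)) < ⊤ := by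
  set F : ℝ → ℝ≥0∞ := fun u => ENNReal.ofReal (min (|u| ^ (-(1:ℝ)/2)) (|u| ^ (-(3:ℝ)/2)) ^ r)
    with hFdef
  have hr0 : (0:ℝ) < r := lt_of_lt_of_le one_pos hr1
  have Feven : ∀ u : ℝ, F (-u) = F u := by intro u; simp only [hFdef, abs_neg]
  have hhalf : (∫⁻ u in Set.Iio (0:ℝ), F u) = ∫⁻ u in Set.Ioi (0:ℝ), F u := by
    have hmp := Measure.measurePreserving_neg (volume : Measure ℝ)
    have hme : MeasurableEmbedding (Neg.neg : ℝ → ℝ) :=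
      (Homeomorph.neg ℝ).measurableEmbedding
    have h2 := hmp.setLIntegral_comp_emb hme F (Set.Ioi 0)
    have h3 : (Neg.neg '' Set.Ioi (0:ℝ)) = Set.Iio 0 := by
      ext x
      simp only [Set.mem_image, Set.mem_Ioi, Set.mem_Iio]
      constructor
      · rintro ⟨y, hy, rfl⟩; linarith
      · intro hx; exact ⟨-x, by linarith, by ring⟩
    rw [h3] at h2
    rw [← h2]
    exact setLIntegral_congr_fun measurableSet_Ioi (fun u _ => Feven u)
  have hIoi : (∫⁻ u in Set.Ioi (0:ℝ), F u) < ⊤ := by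
    have hsplit : Set.Ioc (0:ℝ) 1 ∪ Set.Ioi 1 = Set.Ioi 0 := Set.Ioc_union_Ioi_eq_Ioi zero_le_one
    rw [← hsplit, lintegral_union measurableSet_Ioi Set.Ioc_disjoint_Ioi_same]
    have piece1 : (∫⁻ u in Set.Ioc (0:ℝ) 1, F u) < ⊤ := by
      have hcong : ∀ u ∈ Set.Ioc (0:ℝ) 1, F u = ENNReal.ofReal (u ^ ((-(1:ℝ)/2) * r)) := by
        intro u hu
        have h0 : (0:ℝ) < u := hu.1
        have hmin : min (|u| ^ (-(1:ℝ)/2)) (|u| ^ (-(3:ℝ)/2)) = u ^ (-(1:ℝ)/2) := by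
          rw [abs_of_pos h0]
          exact min_eq_left (Real.rpow_le_rpow_of_exponent_ge h0 hu.2 (by norm_num))
        rw [hFdef]
        simp only
        rw [hmin, ← Real.rpow_mul h0.le]
      rw [setLIntegral_congr_fun measurableSet_Ioc hcong]
      have hint : IntegrableOn (fun u : ℝ => u ^ ((-(1:ℝ)/2) * r)) (Set.Ioc 0 1) := by
        rw [← intervalIntegrable_iff_integrableOn_Ioc_of_le zero_le_one]
        apply intervalIntegral.intervalIntegrable_rpow'
        nlinarith
      exact hint.lintegral_lt_top
    have piece2 : (∫⁻ u in Set.Ioi (1:ℝ), F u) < ⊤ := by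
      have hcong : ∀ u ∈ Set.Ioi (1:ℝ), F u = ENNReal.ofReal (u ^ ((-(3:ℝ)/2) * r)) := by
        intro u hu
        have h1u : (1:ℝ) ≤ u := le_of_lt hu
        have h0 : (0:ℝ) < u := lt_of_lt_of_le one_pos h1u
        have hmin : min (|u| ^ (-(1:ℝ)/2)) (|u| ^ (-(3:ℝ)/2)) = u ^ (-(3:ℝ)/2) := by
          rw [abs_of_pos h0]
          exact min_eq_right (Real.rpow_le_rpow_of_exponent_le h1u (by norm_num))
        rw [hFdef]
        simp only
        rw [hmin, ← Real.rpow_mul h0.le]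
      rw [setLIntegral_congr_fun measurableSet_Ioi hcong]
      have hint : IntegrableOn (fun u : ℝ => u ^ ((-(3:ℝ)/2) * r)) (Set.Ioi 1) :=
        integrableOn_Ioi_rpow_of_lt (by nlinarith) zero_lt_one
      exact hint.lintegral_lt_top
    exact ENNReal.add_lt_top.2 ⟨piece1, piece2⟩
  have htotal : (∫⁻ u : ℝ, F u) =
      (∫⁻ u in Set.Iio (0:ℝ), F u) + ∫⁻ u in Set.Ici (0:ℝ), F u := by
    rw [← lintegral_add_compl F measurableSet_Iio, Set.compl_Iio]
  have hIci : (∫⁻ u in Set.Ici (0:ℝ), F u) = ∫⁻ u in Set.Ioi (0:ℝ), F u :=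
    (setLIntegral_congr (Ioi_ae_eq_Ici (a := (0:ℝ)))).symm
  rw [htotal, hhalf, hIci]
  exact ENNReal.add_lt_top.2 ⟨hIoi, hIoi⟩

private lemma young_ennreal {F G : ℝ → ℝ≥0∞} (hF : Measurable F) (hG : Measurable G)
    {p r q : ℝ} (hp : 1 ≤ p) (hr : 1 ≤ r) (hq : 1 ≤ q)
    (hprq : 1 / p + 1 = 1 / r + 1 / q) :
    ∫⁻ t : ℝ, (∫⁻ s : ℝ, F (t - s) * G s) ^ p ≤
      (∫⁻ u : ℝ, F u ^ r) ^ (p / r) * (∫⁻ s : ℝ, G s ^ q) ^ (p / q) := by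
  have hp0 : 0 < p := lt_of_lt_of_le one_pos hp
  have hr0 : 0 < r := lt_of_lt_of_le one_pos hr
  have hq0 : 0 < q := lt_of_lt_of_le one_pos hq
  obtain ⟨a, ha_def⟩ : ∃ a : ℝ, a = 1 / r - 1 / p := ⟨_, rfl⟩
  obtain ⟨b, hb_def⟩ : ∃ b : ℝ, b = 1 / q - 1 / p := ⟨_, rfl⟩
  have hq1 : 1 / q ≤ 1 := by rw [div_le_one hq0]; exact hq
  have hr1 : 1 / r ≤ 1 := by rw [div_le_one hr0]; exact hr
  have ha : 0 ≤ a := by rw [ha_def]; linarith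
  have hb : 0 ≤ b := by rw [hb_def]; linarith
  have hra : r * (1 / p) + r * a = 1 := by rw [ha_def]; field_simp; ring
  have hqb : q * (1 / p) + q * b = 1 := by rw [hb_def]; field_simp; ring
  have key : ∀ x y : ℝ≥0∞, x * y = (x ^ r * y ^ q) ^ (1 / p) * ((x ^ r) ^ a * (y ^ q) ^ b) := by
    intro x y
    rw [ENNReal.mul_rpow_of_nonneg _ _ (by positivity : (0:ℝ) ≤ 1 / p)]
    rw [← ENNReal.rpow_mul, ← ENNReal.rpow_mul, ← ENNReal.rpow_mul, ← ENNReal.rpow_mul]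
    rw [mul_mul_mul_comm]
    rw [← ENNReal.rpow_add_of_nonneg _ _ (by positivity) (mul_nonneg hr0.le ha)]
    rw [← ENNReal.rpow_add_of_nonneg _ _ (by positivity) (mul_nonneg hq0.le hb)]
    rw [hra, hqb, ENNReal.rpow_one, ENNReal.rpow_one]
  have hFt : ∀ t : ℝ, Measurable fun s => F (t - s) := fun t =>
    hF.comp (measurable_const.sub measurable_id)
  have hFr : Measurable fun u => F u ^ r := hF.pow_const r
  have hGq : Measurable fun s => G s ^ q := hG.pow_const q
  have holder : ∀ t : ℝ, (∫⁻ s : ℝ, F (t - s) * G s) ≤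
      (∫⁻ s : ℝ, F (t - s) ^ r * G s ^ q) ^ (1 / p) *
        ((∫⁻ u : ℝ, F u ^ r) ^ a * (∫⁻ s : ℝ, G s ^ q) ^ b) := by
    intro t
    have h3 := ENNReal.lintegral_mul_prod_norm_pow_le (μ := (volume : Measure ℝ))
      (Finset.univ : Finset (Fin 2))
      (g := fun s => F (t - s) ^ r * G s ^ q)
      (f := ![fun s => F (t - s) ^ r, fun s => G s ^ q])
      (((hFt t).pow_const r).mul hGq).aemeasurable
      (by
        intro i _
        fin_cases i
        · exact ((hFt t).pow_const r).aemeasurable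
        · exact hGq.aemeasurable)
      (1 / p) (p := ![a, b])
      (by simp only [Fin.sum_univ_two, Matrix.cons_val_zero, Matrix.cons_val_one,
            Matrix.head_cons]; rw [ha_def, hb_def]; linarith)
      (by positivity)
      (by
        intro i _
        fin_cases i
        · exact ha
        · exact hb)
    simp only [Fin.prod_univ_two, Matrix.cons_val_zero, Matrix.cons_val_one, Matrix.head_cons]
      at h3
    calc (∫⁻ s : ℝ, F (t - s) * G s)
        = ∫⁻ s : ℝ, (F (t - s) ^ r * G s ^ q) ^ (1 / p) *
            ((F (t - s) ^ r) ^ a * (G s ^ q) ^ b) := by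
          exact lintegral_congr fun s => key (F (t - s)) (G s)
      _ ≤ (∫⁻ s : ℝ, F (t - s) ^ r * G s ^ q) ^ (1 / p) *
            ((∫⁻ s : ℝ, F (t - s) ^ r) ^ a * (∫⁻ s : ℝ, G s ^ q) ^ b) := by
          simpa [mul_assoc] using h3
      _ = (∫⁻ s : ℝ, F (t - s) ^ r * G s ^ q) ^ (1 / p) *
            ((∫⁻ u : ℝ, F u ^ r) ^ a * (∫⁻ s : ℝ, G s ^ q) ^ b) := by
          rw [lint_sub_left (fun u => F u ^ r) hFr t]
  have hmeas_inner : Measurable (Function.uncurry fun t s : ℝ => F (t - s) ^ r * G s ^ q) := by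
    have h1 : Measurable fun z : ℝ × ℝ => F (z.1 - z.2) :=
      hF.comp (measurable_fst.sub measurable_snd)
    have h2 : Measurable fun z : ℝ × ℝ => G z.2 := hG.comp measurable_snd
    exact (h1.pow_const r).mul (h2.pow_const q)
  have swap : (∫⁻ t : ℝ, ∫⁻ s : ℝ, F (t - s) ^ r * G s ^ q) =
      (∫⁻ u : ℝ, F u ^ r) * (∫⁻ s : ℝ, G s ^ q) := by
    rw [lintegral_lintegral_swap hmeas_inner.aemeasurable]
    have h4 : ∀ s : ℝ, (∫⁻ t : ℝ, F (t - s) ^ r * G s ^ q) =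
        (∫⁻ u : ℝ, F u ^ r) * G s ^ q := by
      intro s
      have h5 : (∫⁻ t : ℝ, F (t - s) ^ r * G s ^ q) = (∫⁻ t : ℝ, F (t - s) ^ r) * G s ^ q :=
        lintegral_mul_const _ ((hF.comp (measurable_id.sub measurable_const)).pow_const r)
      rw [h5]
      congr 1
      exact lintegral_sub_right_eq_self (fun u => F u ^ r) s
    simp_rw [h4]
    rw [lintegral_const_mul _ hGq]
  set X := ∫⁻ u : ℝ, F u ^ r with hX
  set Y := ∫⁻ s : ℝ, G s ^ q with hY

  calc ∫⁻ t : ℝ, (∫⁻ s : ℝ, F (t - s) * G s) ^ p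
      ≤ ∫⁻ t : ℝ, ((∫⁻ s : ℝ, F (t - s) ^ r * G s ^ q) ^ (1 / p) * (X ^ a * Y ^ b)) ^ p :=
        lintegral_mono fun t => ENNReal.rpow_le_rpow (holder t) hp0.le
    _ = ∫⁻ t : ℝ, (∫⁻ s : ℝ, F (t - s) ^ r * G s ^ q) * (X ^ a * Y ^ b) ^ p := by
        refine lintegral_congr fun t => ?_
        rw [ENNReal.mul_rpow_of_nonneg _ _ hp0.le, ← ENNReal.rpow_mul, one_div,
          inv_mul_cancel₀ hp0.ne', ENNReal.rpow_one]
    _ = (∫⁻ t : ℝ, ∫⁻ s : ℝ, F (t - s) ^ r * G s ^ q) * (X ^ a * Y ^ b) ^ p :=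
        lintegral_mul_const _ hmeas_inner.lintegral_prod_right
    _ = (X * Y) * (X ^ a * Y ^ b) ^ p := by rw [swap]
    _ = X ^ (p / r) * Y ^ (p / q) := by
        rw [ENNReal.mul_rpow_of_nonneg _ _ hp0.le, ← ENNReal.rpow_mul, ← ENNReal.rpow_mul]
        calc (X * Y) * (X ^ (a * p) * Y ^ (b * p))
            = (X ^ (1:ℝ) * X ^ (a * p)) * (Y ^ (1:ℝ) * Y ^ (b * p)) := by
              rw [ENNReal.rpow_one, ENNReal.rpow_one, mul_mul_mul_comm]
          _ = X ^ (1 + a * p) * Y ^ (1 + b * p) := by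
              rw [← ENNReal.rpow_add_of_nonneg _ _ zero_le_one (mul_nonneg ha hp0.le),
                ← ENNReal.rpow_add_of_nonneg _ _ zero_le_one (mul_nonneg hb hp0.le)]
          _ = X ^ (p / r) * Y ^ (p / q) := by
              rw [show (1:ℝ) + a * p = p / r by rw [ha_def]; field_simp; ring,
                show (1:ℝ) + b * p = p / q by rw [hb_def]; field_simp; ring]


/-- Commutator-type kernel bounds: if `η : ℝ → [0,1]` is Lipschitz with constant `L`,
`|K(t,s)| ≤ C|η(t)-η(s)|/|t-s|^{3/2}` for `t ≠ s`, and `L·h̃ ≤ c₀`, then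
`|K(t,s)| ≲ h̃^{-3/2} φ((t-s)/h̃)` with `φ(t) = min{|t|^{-1/2}, |t|^{-3/2}}`, and the
integral operator with kernel `K` maps `L²(ℝ)` to `L^p(ℝ)` for every `p ∈ [2,∞)` with
norm `≲ h̃^{-1/2-(1/2-1/p)}` (constants depending only on `C`, `c₀` and `p`). -/
theorem stmt14 (C c₀ p : ℝ) (hC : 0 < C) (hc₀ : 0 < c₀) (hp : 2 ≤ p) :
    ∃ C' : ℝ, 0 < C' ∧
      ∀ (η : ℝ → ℝ) (L htil : ℝ) (K : ℝ → ℝ → ℂ),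
        0 < htil → 0 ≤ L → LipschitzWith (Real.toNNReal L) η →
        (∀ t, η t ∈ Set.Icc (0 : ℝ) 1) →
        (∀ t s, t ≠ s → ‖K t s‖ ≤ C * |η t - η s| / |t - s| ^ ((3 : ℝ) / 2)) →
        L * htil ≤ c₀ →
        ((∀ t s : ℝ, t ≠ s →
            ‖K t s‖ ≤ C' * htil ^ (-(3 : ℝ) / 2) *
              min (|(t - s) / htil| ^ (-(1 : ℝ) / 2)) (|(t - s) / htil| ^ (-(3 : ℝ) / 2))) ∧
          ∀ f : ℝ → ℂ, MemLp f 2 volume →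
            eLpNorm (fun t => ∫ s, K t s * f s) (ENNReal.ofReal p) volume ≤
              ENNReal.ofReal (C' * htil ^ (-(1 : ℝ) / 2 - ((1 : ℝ) / 2 - 1 / p))) *
                eLpNorm f 2 volume) := by
  have hp0 : (0:ℝ) < p := by linarith
  have hp2 : (0:ℝ) < p + 2 := by linarith
  obtain ⟨r, hrdef⟩ : ∃ r : ℝ, r = 2 * p / (p + 2) := ⟨_, rfl⟩
  have hr1 : 1 ≤ r := by rw [hrdef, le_div_iff₀ hp2]; linarith
  have hr2 : r < 2 := by rw [hrdef, div_lt_iff₀ hp2]; linarith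
  have hr0 : (0:ℝ) < r := lt_of_lt_of_le one_pos hr1
  have hrp : 1 / p + 1 = 1 / r + 1 / 2 := by rw [hrdef]; field_simp; ring
  set φ : ℝ → ℝ := fun u => min (|u| ^ (-(1:ℝ)/2)) (|u| ^ (-(3:ℝ)/2)) with hφdef
  have hφmeas : Measurable φ := (measurable_abs.pow_const _).min (measurable_abs.pow_const _)
  have hφnonneg : ∀ u, 0 ≤ φ u := fun u =>
    le_min (Real.rpow_nonneg (abs_nonneg u) _) (Real.rpow_nonneg (abs_nonneg u) _)
  set I : ℝ≥0∞ := ∫⁻ u : ℝ, ENNReal.ofReal (φ u ^ r) with hIdef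
  have hIlt : I < ⊤ := I_fin hr1 hr2
  set J : ℝ := I.toReal ^ (1/r) with hJdef
  have hJ0 : 0 ≤ J := Real.rpow_nonneg ENNReal.toReal_nonneg _
  set B : ℝ := C * max c₀ 1 with hBdef
  have hB0 : 0 < B := mul_pos hC (lt_max_iff.2 (Or.inr one_pos))
  refine ⟨B * max 1 J, mul_pos hB0 (lt_max_iff.2 (Or.inl one_pos)), ?_⟩
  intro η L htil K hhtil hL hlip hη hK hLh
  have hBC' : B ≤ B * max 1 J := le_mul_of_one_le_right hB0.le (le_max_left 1 J)
  -- the pointwise claim with constant B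
  have claim1 : ∀ t s : ℝ, t ≠ s →
      ‖K t s‖ ≤ B * htil ^ (-(3:ℝ)/2) * φ ((t - s) / htil) := by
    intro t s hts
    have hd : t - s ≠ 0 := sub_ne_zero.2 hts
    have habs : 0 < |t - s| := abs_pos.2 hd
    have hdiv : |(t - s) / htil| = |t - s| / htil := by
      rw [abs_div, abs_of_pos hhtil]
    have e1 : (|t - s| / htil) ^ (-(1:ℝ)/2) = |t - s| ^ (-(1:ℝ)/2) * htil ^ ((1:ℝ)/2) := by
      rw [Real.div_rpow (abs_nonneg _) hhtil.le, div_eq_mul_inv, ← Real.rpow_neg hhtil.le]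
      norm_num
    have e2 : (|t - s| / htil) ^ (-(3:ℝ)/2) = |t - s| ^ (-(3:ℝ)/2) * htil ^ ((3:ℝ)/2) := by
      rw [Real.div_rpow (abs_nonneg _) hhtil.le, div_eq_mul_inv, ← Real.rpow_neg hhtil.le]
      norm_num
    have hφval : φ ((t - s) / htil) =
        min (|t - s| ^ (-(1:ℝ)/2) * htil ^ ((1:ℝ)/2)) (|t - s| ^ (-(3:ℝ)/2) * htil ^ ((3:ℝ)/2)) := by
      simp only [hφdef]
      rw [hdiv, e1, e2]
    rw [hφval, mul_min_of_nonneg _ _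
      (mul_nonneg hB0.le (Real.rpow_nonneg hhtil.le _))]
    refine le_min ?_ ?_
    · -- branch 1
      have hLip : |η t - η s| ≤ L * |t - s| := by
        have h1 := hlip.dist_le_mul t s
        rw [Real.dist_eq, Real.dist_eq, Real.coe_toNNReal L hL] at h1
        exact h1
      have eq1 : B * htil ^ (-(3:ℝ)/2) * (|t - s| ^ (-(1:ℝ)/2) * htil ^ ((1:ℝ)/2)) =
          B * htil ^ (-(1:ℝ)) * |t - s| ^ (-(1:ℝ)/2) := by
        rw [show B * htil ^ (-(3:ℝ)/2) * (|t - s| ^ (-(1:ℝ)/2) * htil ^ ((1:ℝ)/2)) =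
          B * (htil ^ (-(3:ℝ)/2) * htil ^ ((1:ℝ)/2)) * |t - s| ^ (-(1:ℝ)/2) from by ring,
          ← Real.rpow_add hhtil]
        norm_num
      rw [eq1]
      calc ‖K t s‖ ≤ C * |η t - η s| / |t - s| ^ ((3:ℝ)/2) := hK t s hts
        _ ≤ C * (L * |t - s|) / |t - s| ^ ((3:ℝ)/2) := by gcongr
        _ = (C * L) * (|t - s| ^ (1:ℝ) / |t - s| ^ ((3:ℝ)/2)) := by
            rw [Real.rpow_one]; ring
        _ = (C * L) * |t - s| ^ (-(1:ℝ)/2) := by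
            rw [← Real.rpow_sub habs]; norm_num
        _ ≤ (B * htil ^ (-(1:ℝ))) * |t - s| ^ (-(1:ℝ)/2) := by
            refine mul_le_mul_of_nonneg_right ?_ (Real.rpow_nonneg (abs_nonneg _) _)
            rw [Real.rpow_neg_one]
            have h1 : L ≤ c₀ / htil := (le_div_iff₀ hhtil).2 hLh
            calc C * L ≤ C * (c₀ / htil) := by gcongr
              _ = C * c₀ * htil⁻¹ := by rw [div_eq_mul_inv]; ring
              _ ≤ C * max c₀ 1 * htil⁻¹ := by
                  have : (0:ℝ) ≤ htil⁻¹ := inv_nonneg.2 hhtil.le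
                  gcongr
                  exact le_max_left c₀ 1
              _ = B * htil⁻¹ := by rw [hBdef]
    · -- branch 2
      have hη1 : |η t - η s| ≤ 1 := by
        have h1 := hη t
        have h2 := hη s
        rw [abs_le]
        constructor <;> [linarith [h1.1, h2.2]; linarith [h1.2, h2.1]]
      have eq2 : B * htil ^ (-(3:ℝ)/2) * (|t - s| ^ (-(3:ℝ)/2) * htil ^ ((3:ℝ)/2)) =
          B * |t - s| ^ (-(3:ℝ)/2) := by
        rw [show B * htil ^ (-(3:ℝ)/2) * (|t - s| ^ (-(3:ℝ)/2) * htil ^ ((3:ℝ)/2)) =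
          B * (htil ^ (-(3:ℝ)/2) * htil ^ ((3:ℝ)/2)) * |t - s| ^ (-(3:ℝ)/2) from by ring,
          ← Real.rpow_add hhtil]
        norm_num
      rw [eq2]
      calc ‖K t s‖ ≤ C * |η t - η s| / |t - s| ^ ((3:ℝ)/2) := hK t s hts
        _ ≤ C * 1 / |t - s| ^ ((3:ℝ)/2) := by gcongr
        _ = C * |t - s| ^ (-(3:ℝ)/2) := by
            rw [mul_one, div_eq_mul_inv, ← Real.rpow_neg (abs_nonneg _)]
            norm_num
        _ ≤ B * |t - s| ^ (-(3:ℝ)/2) := by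
            refine mul_le_mul_of_nonneg_right ?_ (Real.rpow_nonneg (abs_nonneg _) _)
            exact le_mul_of_one_le_right hC.le (le_max_right c₀ 1)
  constructor
  · -- part 1
    intro t s hts
    refine (claim1 t s hts).trans ?_
    have hφval : φ ((t - s) / htil) =
        min (|(t - s) / htil| ^ (-(1:ℝ)/2)) (|(t - s) / htil| ^ (-(3:ℝ)/2)) := rfl
    rw [hφval]
    refine mul_le_mul_of_nonneg_right ?_
      (le_min (Real.rpow_nonneg (abs_nonneg _) _) (Real.rpow_nonneg (abs_nonneg _) _))
    exact mul_le_mul_of_nonneg_right hBC' (Real.rpow_nonneg hhtil.le _)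
  · -- part 2 : the operator bound
    intro f hf
    set P : ℝ≥0∞ := ENNReal.ofReal p with hPdef
    have hPne0 : P ≠ 0 := by
      rw [hPdef]; simp [ENNReal.ofReal_eq_zero]; linarith
    have hPtop : P ≠ ⊤ := ENNReal.ofReal_ne_top
    have hPtoReal : P.toReal = p := ENNReal.toReal_ofReal hp0.le
    set f₀ : ℝ → ℂ := hf.aestronglyMeasurable.mk f with hf₀def
    have hf₀meas : Measurable f₀ := hf.aestronglyMeasurable.stronglyMeasurable_mk.measurable
    have hfeq : f =ᵐ[volume] f₀ := hf.aestronglyMeasurable.ae_eq_mk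
    set G : ℝ → ℝ≥0∞ := fun s => (‖f₀ s‖₊ : ℝ≥0∞) with hGdef
    have hGmeas : Measurable G := hf₀meas.nnnorm.coe_nnreal_ennreal
    set Bh : ℝ := B * htil ^ (-(3:ℝ)/2) with hBhdef
    have hBh0 : 0 < Bh := mul_pos hB0 (Real.rpow_pos_of_pos hhtil _)
    set F : ℝ → ℝ≥0∞ := fun u => ENNReal.ofReal (Bh * φ (u / htil)) with hFdef
    have hFmeas : Measurable F :=
      ENNReal.measurable_ofReal.comp
        (measurable_const.mul (hφmeas.comp (measurable_id.div_const htil)))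
    -- pointwise bound
    have hpt : ∀ t : ℝ, ((‖∫ s : ℝ, K t s * f s‖₊ : ℝ≥0∞)) ≤ ∫⁻ s : ℝ, F (t - s) * G s := by
      intro t
      refine le_trans (enorm_integral_le_lintegral_enorm _) ?_
      refine lintegral_mono_ae ?_
      have h2 : ∀ᵐ (s : ℝ) ∂volume, s ≠ t := by
        rw [MeasureTheory.ae_iff]
        simp only [ne_eq, not_not, Set.setOf_eq_eq_singleton]
        exact measure_singleton t
      filter_upwards [hfeq, h2] with s hfs hst
      rw [enorm_mul]
      refine mul_le_mul' ?_ ?_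
      · have hb := claim1 t s (Ne.symm hst)
        calc ((‖K t s‖₊ : ℝ≥0∞)) = ENNReal.ofReal ‖K t s‖ :=
              (ofReal_norm _).symm
          _ ≤ ENNReal.ofReal (Bh * φ ((t - s) / htil)) := by
              refine ENNReal.ofReal_le_ofReal ?_
              rw [hBhdef]
              exact hb
          _ = F (t - s) := rfl
      · rw [hfs]; rfl
    -- Young's inequality
    have hyoung := young_ennreal hFmeas hGmeas (by linarith : 1 ≤ p) hr1 one_le_two hrp
    set X : ℝ≥0∞ := ∫⁻ u : ℝ, F u ^ r with hXdef
    set Y : ℝ≥0∞ := ∫⁻ s : ℝ, G s ^ (2:ℝ) with hYdef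
    have hstep1 : eLpNorm (fun t => ∫ s : ℝ, K t s * f s) P volume ≤
        X ^ (1/r) * Y ^ ((1:ℝ)/2) := by
      rw [eLpNorm_eq_lintegral_rpow_enorm_toReal hPne0 hPtop, hPtoReal]
      have h3 : (∫⁻ t : ℝ, ((‖∫ s : ℝ, K t s * f s‖₊ : ℝ≥0∞)) ^ p) ≤
          X ^ (p/r) * Y ^ (p/2) := by
        refine le_trans ?_ hyoung
        refine lintegral_mono fun t => ?_
        exact ENNReal.rpow_le_rpow (hpt t) hp0.le
      calc (∫⁻ t : ℝ, ((‖∫ s : ℝ, K t s * f s‖₊ : ℝ≥0∞)) ^ p) ^ (1/p)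
          ≤ (X ^ (p/r) * Y ^ (p/2)) ^ (1/p) := ENNReal.rpow_le_rpow h3 (by positivity)
        _ = X ^ (1/r) * Y ^ ((1:ℝ)/2) := by
            rw [ENNReal.mul_rpow_of_nonneg _ _ (by positivity : (0:ℝ) ≤ 1/p),
              ← ENNReal.rpow_mul, ← ENNReal.rpow_mul,
              show p/r * (1/p) = 1/r by field_simp; try ring,
              show p/2 * (1/p) = (1:ℝ)/2 by field_simp; try ring]
    have hY : Y ^ ((1:ℝ)/2) = eLpNorm f 2 volume := by
      rw [eLpNorm_eq_lintegral_rpow_enorm_toReal (by norm_num) (by norm_num)]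
      have h2r : ((2:ℝ≥0∞)).toReal = (2:ℝ) := by norm_num
      rw [h2r, hYdef]
      congr 1
      refine lintegral_congr_ae ?_
      filter_upwards [hfeq] with s hs
      rw [hGdef]
      simp only
      rw [hs]; rfl
    -- compute X
    have hXeq : X = ENNReal.ofReal (Bh ^ r) * (ENNReal.ofReal htil * I) := by
      have hinner : Measurable fun u : ℝ => ENNReal.ofReal (φ (u / htil) ^ r) :=
        ENNReal.measurable_ofReal.comp
          ((hφmeas.comp (measurable_id.div_const htil)).pow_const r)
      have h5 : ∀ u : ℝ, F u ^ r =
          ENNReal.ofReal (Bh ^ r) * ENNReal.ofReal (φ (u / htil) ^ r) := by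
        intro u
        rw [hFdef]
        simp only
        rw [ENNReal.ofReal_rpow_of_nonneg (mul_nonneg hBh0.le (hφnonneg _)) hr0.le,
          Real.mul_rpow hBh0.le (hφnonneg _),
          ENNReal.ofReal_mul (Real.rpow_nonneg hBh0.le r)]
      rw [hXdef]
      simp_rw [h5]
      rw [lintegral_const_mul _ hinner]
      congr 1
      exact lint_scale (fun v => ENNReal.ofReal (φ v ^ r)) (ENNReal.measurable_ofReal.comp
        (hφmeas.pow_const r)) hhtil
    have hXpow : X ^ (1/r) = ENNReal.ofReal (Bh * (htil ^ (1/r) * J)) := by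
      rw [hXeq, ENNReal.mul_rpow_of_nonneg _ _ (by positivity : (0:ℝ) ≤ 1/r),
        ENNReal.mul_rpow_of_nonneg _ _ (by positivity : (0:ℝ) ≤ 1/r)]
      rw [ENNReal.ofReal_rpow_of_nonneg (Real.rpow_nonneg hBh0.le r) (by positivity),
        ← Real.rpow_mul hBh0.le, mul_one_div_cancel hr0.ne', Real.rpow_one]
      rw [ENNReal.ofReal_rpow_of_nonneg hhtil.le (by positivity)]
      rw [← ENNReal.ofReal_toReal hIlt.ne,
        ENNReal.ofReal_rpow_of_nonneg ENNReal.toReal_nonneg (by positivity : (0:ℝ) ≤ 1/r)]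
      rw [← ENNReal.ofReal_mul (Real.rpow_nonneg hhtil.le _),
        ← ENNReal.ofReal_mul hBh0.le]
    calc eLpNorm (fun t => ∫ s : ℝ, K t s * f s) P volume
        ≤ X ^ (1/r) * Y ^ ((1:ℝ)/2) := hstep1
      _ = ENNReal.ofReal (Bh * (htil ^ (1/r) * J)) * eLpNorm f 2 volume := by
          rw [hXpow, hY]
      _ ≤ ENNReal.ofReal (B * max 1 J * htil ^ (-(1:ℝ)/2 - ((1:ℝ)/2 - 1/p))) *
            eLpNorm f 2 volume := by
          refine mul_le_mul_left (ENNReal.ofReal_le_ofReal ?_) _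
          have hee : htil ^ (-(3:ℝ)/2) * htil ^ (1/r) =
              htil ^ (-(1:ℝ)/2 - ((1:ℝ)/2 - 1/p)) := by
            rw [← Real.rpow_add hhtil]
            congr 1
            rw [hrdef]
            field_simp
            ring
          calc Bh * (htil ^ (1/r) * J)
              = B * J * (htil ^ (-(3:ℝ)/2) * htil ^ (1/r)) := by rw [hBhdef]; ring
            _ = B * J * htil ^ (-(1:ℝ)/2 - ((1:ℝ)/2 - 1/p)) := by rw [hee]
            _ ≤ B * max 1 J * htil ^ (-(1:ℝ)/2 - ((1:ℝ)/2 - 1/p)) := by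
                refine mul_le_mul_of_nonneg_right ?_ (Real.rpow_nonneg hhtil.le _)
                exact mul_le_mul_of_nonneg_left (le_max_right 1 J) hB0.le
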